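/- Let V be a finite-dimensional real vector space and suppose ρ : ℝ → End(V) is a map satisfying ρ(ab) = ρ(a)ρ(b) for all a, b ∈ ℝ, ρ(1) = id, and each matrix entry of ρ(a) is a polynomial function of a. Then V decomposes as a direct sum V = ⊕_{n ∈ ℕ} V_n of subspaces such that ρ(a) acts on V_n as multiplication by aⁿ for every a ∈ ℝ. -/

import Mathlib

open Polynomial Finset

private lemma coeff_unique' (N n : ℕ) (e f : ℕ → ℝ)
    (h : ∀ x : ℝ, ∑ k ∈ range N, e k * x ^ k = ∑ k ∈ range N, f k * x ^ k)
    (hn : n < N) : e n = f n := by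
  have hpq : (∑ k ∈ range N, C (e k) * X ^ k) = ∑ k ∈ range N, C (f k) * X ^ k := by
    apply Polynomial.funext
    intro r
    simp only [Polynomial.eval_finset_sum, Polynomial.eval_mul, Polynomial.eval_C,
      Polynomial.eval_pow, Polynomial.eval_X]
    exact h r
  have := congrArg (fun p => Polynomial.coeff p n) hpq
  simpa [Polynomial.finset_sum_coeff, Polynomial.coeff_C_mul, Polynomial.coeff_X_pow,
    Finset.sum_ite_eq', hn] using this

private lemma coeff_eq_sum_eval' (N n : ℕ) (q : ℝ[X]) (hq : q.natDegree ≤ N) :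
    q.coeff n = ∑ i ∈ range (N+1),
      (Lagrange.basis (range (N+1)) (fun k : ℕ => (k : ℝ)) i).coeff n * q.eval (i : ℝ) := by
  have hinj : Set.InjOn (fun k : ℕ => (k : ℝ)) (range (N+1)) :=
    fun a _ b _ h => Nat.cast_injective h
  have hdeg : q.degree < ((range (N+1)).card : ℕ) := by
    rw [Finset.card_range]
    exact lt_of_le_of_lt q.degree_le_natDegree (by exact_mod_cast Nat.lt_succ_of_le hq)
  have hint := Lagrange.eq_interpolate (v := fun k : ℕ => (k : ℝ)) hinj hdeg
  conv_lhs => rw [hint]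
  rw [Lagrange.interpolate_apply, Polynomial.finset_sum_coeff]
  exact Finset.sum_congr rfl fun i _ => by rw [Polynomial.coeff_C_mul]; ring

private lemma basis_coeff_zero' (N n i : ℕ) (hi : i ∈ range (N+1)) (hn : N < n) :
    (Lagrange.basis (range (N+1)) (fun k : ℕ => (k : ℝ)) i).coeff n = 0 := by
  have hinj : Set.InjOn (fun k : ℕ => (k : ℝ)) (range (N+1)) :=
    fun a _ b _ h => Nat.cast_injective h
  apply Polynomial.coeff_eq_zero_of_degree_lt
  rw [Lagrange.degree_basis hinj hi, Finset.card_range]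
  exact_mod_cast (by omega : N + 1 - 1 < n)

/-- A polynomial representation of the multiplicative monoid `(ℝ, ·)` on a
finite-dimensional real vector space decomposes the space into a direct sum of
weight spaces on which `ρ a` acts as multiplication by `aⁿ`. -/
theorem polynomial_monoid_rep_graded
    (V : Type) [AddCommGroup V] [Module ℝ V] [FiniteDimensional ℝ V]
    (ρ : ℝ → (V →ₗ[ℝ] V))
    (hmul : ∀ a b : ℝ, ρ (a * b) = ρ a ∘ₗ ρ b)
    (hone : ρ 1 = LinearMap.id)
    (hpoly : ∀ (φ : V →ₗ[ℝ] ℝ) (v : V), ∃ p : Polynomial ℝ,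
      ∀ a : ℝ, φ (ρ a v) = p.eval a) :
    ∃ W : ℕ → Submodule ℝ V, DirectSum.IsInternal W ∧
      ∀ (n : ℕ) (a : ℝ) (v : V), v ∈ W n → ρ a v = a ^ n • v := by
  classical
  have hsep : ∀ v w : V, (∀ φ : V →ₗ[ℝ] ℝ, φ v = φ w) → v = w := by
    intro v w h
    have h0 : ∀ φ : Module.Dual ℝ V, φ (v - w) = 0 := fun φ => by
      rw [map_sub, h φ, sub_self]
    exact sub_eq_zero.mp ((Module.forall_dual_apply_eq_zero_iff ℝ (v - w)).mp h0)
  set d := Module.finrank ℝ V with hd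
  let b : Module.Basis (Fin d) ℝ V := Module.finBasis ℝ V
  choose p hp' using fun (i j : Fin d) => hpoly (b.coord j) (b i)
  have hp : ∀ i j a, b.repr (ρ a (b i)) j = (p i j).eval a := fun i j a => hp' i j a
  obtain ⟨N, hNle⟩ : ∃ N : ℕ, ∀ i j, (p i j).natDegree ≤ N :=
    ⟨(Finset.univ : Finset (Fin d × Fin d)).sup (fun ij => (p ij.1 ij.2).natDegree),
      fun i j => Finset.le_sup (f := fun ij : Fin d × Fin d => (p ij.1 ij.2).natDegree)
        (Finset.mem_univ (i, j))⟩
  -- uniform degree bound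
  have hQ : ∀ (φ : V →ₗ[ℝ] ℝ) (v : V), ∃ q : ℝ[X], q.natDegree ≤ N ∧
      ∀ a : ℝ, φ (ρ a v) = q.eval a := by
    intro φ v
    refine ⟨∑ i, ∑ j, Polynomial.C (b.repr v i * φ (b j)) * p i j, ?_, ?_⟩
    · apply Polynomial.natDegree_sum_le_of_forall_le
      intro i _
      apply Polynomial.natDegree_sum_le_of_forall_le
      intro j _
      exact le_trans (Polynomial.natDegree_C_mul_le _ _) (hNle i j)
    · intro a
      have hbi : ∀ i, ρ a (b i) = ∑ j, (p i j).eval a • b j := by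
        intro i
        nth_rewrite 1 [← b.sum_repr (ρ a (b i))]
        exact Finset.sum_congr rfl fun j _ => by rw [hp i j a]
      have h1 : φ (ρ a v) = ∑ i, b.repr v i * ∑ j, (p i j).eval a * φ (b j) := by
        conv_lhs => rw [← b.sum_repr v]
        rw [map_sum (ρ a), map_sum φ]
        refine Finset.sum_congr rfl fun i _ => ?_
        rw [map_smul, map_smul, smul_eq_mul, hbi i, map_sum φ]
        congr 1
        exact Finset.sum_congr rfl fun j _ => by rw [map_smul, smul_eq_mul]
      rw [h1]
      simp only [Polynomial.eval_finset_sum, Polynomial.eval_mul, Polynomial.eval_C,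
        Finset.mul_sum]
      exact Finset.sum_congr rfl fun i _ => Finset.sum_congr rfl fun j _ => by ring
  -- the projections
  let P : ℕ → (V →ₗ[ℝ] V) := fun n => ∑ i ∈ range (N+1),
    (Lagrange.basis (range (N+1)) (fun k : ℕ => (k : ℝ)) i).coeff n • ρ (i : ℝ)
  have hPapp : ∀ (n : ℕ) (φ : V →ₗ[ℝ] ℝ) (v : V) (q : ℝ[X]), q.natDegree ≤ N →
      (∀ a : ℝ, φ (ρ a v) = q.eval a) → φ (P n v) = q.coeff n := by
    intro n φ v q hq hval
    have hPv : P n v = ∑ i ∈ range (N+1),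
        (Lagrange.basis (range (N+1)) (fun k : ℕ => (k : ℝ)) i).coeff n • ρ (i : ℝ) v := by
      simp [P, LinearMap.sum_apply, LinearMap.smul_apply]
    rw [hPv, map_sum φ, coeff_eq_sum_eval' N n q hq]
    exact Finset.sum_congr rfl fun i _ => by rw [map_smul, smul_eq_mul, hval]
  have hexp : ∀ (a : ℝ) (v : V), ρ a v = ∑ n ∈ range (N+1), a ^ n • P n v := by
    intro a v
    apply hsep
    intro φ
    obtain ⟨q, hq, hval⟩ := hQ φ v
    rw [hval a, map_sum φ]
    have h2 : ∀ n ∈ range (N+1), φ (a ^ n • P n v) = q.coeff n * a ^ n := fun n _ => by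
      rw [map_smul, smul_eq_mul, hPapp n φ v q hq hval]; ring
    rw [Finset.sum_congr rfl h2]
    exact Polynomial.eval_eq_sum_range' (Nat.lt_succ_of_le hq) a
  -- orthogonality
  have horth : ∀ m k, m ≤ N → k ≤ N → ∀ u : V,
      P m (P k u) = if m = k then P k u else 0 := by
    intro m k hm hk u
    apply hsep
    intro φ
    have key : ∀ a x : ℝ,
        ∑ n ∈ range (N+1), (φ (P n u) * a ^ n) * x ^ n =
        ∑ kk ∈ range (N+1), (∑ mm ∈ range (N+1), φ (P mm (P kk u)) * a ^ mm) * x ^ kk := by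
      intro a x
      have e1 : φ (ρ (a * x) u) = ∑ n ∈ range (N+1), (φ (P n u) * a ^ n) * x ^ n := by
        rw [hexp (a * x) u, map_sum φ]
        exact Finset.sum_congr rfl fun n _ => by
          rw [map_smul, smul_eq_mul, mul_pow]; ring
      have e2 : φ (ρ (a * x) u) =
          ∑ kk ∈ range (N+1), (∑ mm ∈ range (N+1), φ (P mm (P kk u)) * a ^ mm) * x ^ kk := by
        have : ρ (a * x) u = ρ a (ρ x u) := by rw [hmul a x]; rfl
        rw [this, hexp x u, map_sum (ρ a), map_sum φ]
        refine Finset.sum_congr rfl fun kk _ => ?_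
        rw [map_smul, map_smul, smul_eq_mul, hexp a (P kk u), map_sum φ]
        rw [Finset.mul_sum, Finset.sum_mul]
        refine Finset.sum_congr rfl fun mm _ => ?_
        rw [map_smul, smul_eq_mul]; ring
      rw [← e1, e2]
    have step1 : ∀ a : ℝ, φ (P k u) * a ^ k =
        ∑ mm ∈ range (N+1), φ (P mm (P k u)) * a ^ mm := by
      intro a
      exact coeff_unique' (N+1) k (fun n => φ (P n u) * a ^ n)
        (fun kk => ∑ mm ∈ range (N+1), φ (P mm (P kk u)) * a ^ mm)
        (key a) (Nat.lt_succ_of_le hk)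
    have step2 : (if m = k then φ (P k u) else 0) = φ (P m (P k u)) := by
      have lhs_eq : ∀ a : ℝ,
          ∑ mm ∈ range (N+1), (if mm = k then φ (P k u) else 0) * a ^ mm =
          ∑ mm ∈ range (N+1), φ (P mm (P k u)) * a ^ mm := by
        intro a
        rw [← step1 a]
        rw [Finset.sum_congr rfl (fun mm _ => by rw [ite_mul, zero_mul])]
        rw [Finset.sum_ite_eq' (range (N+1)) k (fun mm => φ (P k u) * a ^ mm)]
        simp [Nat.lt_succ_of_le hk]
      exact coeff_unique' (N+1) m _ _ lhs_eq (Nat.lt_succ_of_le hm)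
    rw [← step2]
    split <;> simp
  have hPzero : ∀ n, N < n → P n = 0 := by
    intro n hn
    have : ∀ i ∈ range (N+1),
        (Lagrange.basis (range (N+1)) (fun k : ℕ => (k : ℝ)) i).coeff n • ρ (i : ℝ)
          = (0 : V →ₗ[ℝ] V) := fun i hi => by
      rw [basis_coeff_zero' N n i hi hn, zero_smul]
    simp only [P]
    rw [Finset.sum_congr rfl this, Finset.sum_const, smul_zero]
  refine ⟨fun n => LinearMap.range (P n), ?_, ?_⟩
  · apply DirectSum.isInternal_submodule_of_iSupIndep_of_iSup_eq_top
    · -- independence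
      intro n
      rw [disjoint_iff_inf_le]
      intro v hv
      obtain ⟨hv1, hv2⟩ := hv
      by_cases hn : n ≤ N
      · have hker : (⨆ j, ⨆ _ : j ≠ n, LinearMap.range (P j)) ≤ LinearMap.ker (P n) := by
          refine iSup_le fun j => iSup_le fun hj => ?_
          rintro x ⟨u, rfl⟩
          rw [LinearMap.mem_ker]
          by_cases hjN : j ≤ N
          · rw [horth n j hn hjN u, if_neg (fun h => hj h.symm)]
          · rw [hPzero j (by omega), LinearMap.zero_apply, map_zero]
        have hvk : P n v = 0 := hker hv2
        obtain ⟨u, hu⟩ := hv1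
        have : P n v = v := by rw [← hu, horth n n hn hn u, if_pos rfl]
        rw [this] at hvk
        simpa using hvk
      · obtain ⟨u, hu⟩ := hv1
        rw [hPzero n (by omega), LinearMap.zero_apply] at hu
        simp [← hu]
    · -- sup = top
      rw [eq_top_iff]
      intro v _
      have hv : v = ∑ n ∈ range (N+1), P n v := by
        have h1 := hexp 1 v
        rw [hone] at h1
        simpa using h1
      rw [hv]
      exact Submodule.sum_mem _ fun n _ =>
        Submodule.mem_iSup_of_mem n ⟨v, rfl⟩
  · -- the action
    rintro n a v ⟨u, rfl⟩
    by_cases hn : n ≤ N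
    · rw [hexp a (P n u)]
      have : ∀ m ∈ range (N+1), a ^ m • P m (P n u) =
          if m = n then a ^ n • P n u else 0 := by
        intro m hm
        rw [horth m n (by simp at hm; omega) hn u]
        split
        · rename_i h; rw [h]
        · rw [smul_zero]
      rw [Finset.sum_congr rfl this, Finset.sum_ite_eq' (range (N+1)) n
        (fun _ => a ^ n • P n u)]
      simp [Nat.lt_succ_of_le hn]
    · rw [hPzero n (by omega)]
      simp
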